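/- Let p be a real polynomial such that p(x) > 0 for all x ∈ (0,1). Then there exists an integer d_0 ≥ deg(p) such that for all d ≥ d_0 and all 0 ≤ k ≤ d, the Bernstein coefficient β_{k,d}(p) is nonnegative. -/

import Mathlib

/-!
If `p(x) > 0` on `(0,1)`, then for all sufficiently large degrees `d` all the
Bernstein-basis coefficients of `p` in degree `d` are nonnegative.
-/

open Polynomial Finset
set_option maxHeartbeats 1000000

lemma choose_descFactorial (d k i : ℕ) (hik : i ≤ k) (hkd : k ≤ d) :
    d.choose k * k.descFactorial i = d.descFactorial i * (d - i).choose (k - i) := by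
  rw [Nat.descFactorial_eq_factorial_mul_choose, Nat.descFactorial_eq_factorial_mul_choose,
    ← Nat.mul_assoc, Nat.mul_comm (d.choose k) (Nat.factorial i), Nat.mul_assoc,
    Nat.choose_mul hik, Nat.mul_assoc]

lemma core_sum (d i : ℕ) (hid : i ≤ d) (x : ℝ) :
    ∑ k ∈ range (d+1), ((k.descFactorial i : ℝ) / (d.descFactorial i : ℝ))
      * (bernsteinPolynomial ℝ d k).eval x = x ^ i := by
  have hD : (0:ℝ) < (d.descFactorial i : ℝ) := by
    have : d.descFactorial i ≠ 0 := by
      simp [Nat.descFactorial_eq_zero_iff_lt]; omega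
    exact_mod_cast Nat.pos_of_ne_zero this
  have hsplit : range (d+1) = Ico 0 i ∪ Ico i (d+1) := by
    rw [Finset.range_eq_Ico, Finset.Ico_union_Ico_eq_Ico (Nat.zero_le i) (by omega)]
  rw [hsplit, Finset.sum_union (by
    simp [Finset.disjoint_left]; omega)]
  have h1 : ∑ k ∈ Ico 0 i, ((k.descFactorial i : ℝ) / (d.descFactorial i : ℝ))
      * (bernsteinPolynomial ℝ d k).eval x = 0 := by
    apply Finset.sum_eq_zero
    intro k hk
    simp only [Finset.mem_Ico] at hk
    rw [Nat.descFactorial_eq_zero_iff_lt.mpr hk.2]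
    simp
  rw [h1, zero_add, Finset.sum_Ico_eq_sum_range]
  have h2 : ∀ m ∈ range (d + 1 - i), ((((i+m).descFactorial i : ℝ)) / (d.descFactorial i : ℝ))
      * (bernsteinPolynomial ℝ d (i+m)).eval x
      = x ^ i * (x ^ m * (1-x) ^ (d - i - m) * ((d-i).choose m : ℝ)) := by
    intro m hm
    simp only [Finset.mem_range] at hm
    have him : i + m ≤ d := by omega
    have key : (d.choose (i+m) : ℝ) * ((i+m).descFactorial i : ℝ)
        = (d.descFactorial i : ℝ) * ((d - i).choose m : ℝ) := by
      have := choose_descFactorial d (i+m) i (Nat.le_add_right _ _) him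
      rw [Nat.add_sub_cancel_left] at this
      exact_mod_cast this
    have heval : (bernsteinPolynomial ℝ d (i+m)).eval x
        = (d.choose (i+m) : ℝ) * x ^ (i+m) * (1 - x) ^ (d - (i+m)) := by
      simp [bernsteinPolynomial]
    rw [heval]
    have hexp : d - (i + m) = d - i - m := by omega
    rw [hexp, pow_add]
    field_simp
    linear_combination (x ^ i * x ^ m * (1 - x) ^ (d - i - m)) * key
  rw [Finset.sum_congr rfl h2, ← Finset.mul_sum]
  have : d + 1 - i = (d - i) + 1 := by omega
  rw [this]
  have := add_pow x (1-x) (d-i)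
  simp only [add_sub_cancel, one_pow] at this
  rw [← this]
  simp

lemma ratio_bounds (n d : ℕ) (hnd : n < d) :
    ∀ i, i ≤ n → ∀ k, k ≤ d →
      ((k:ℝ)/d)^i - ((i:ℝ)*n)/((d:ℝ)-n) ≤ (k.descFactorial i : ℝ)/(d.descFactorial i : ℝ)
      ∧ (k.descFactorial i : ℝ)/(d.descFactorial i : ℝ) ≤ ((k:ℝ)/d)^i := by
  intro i
  induction i with
  | zero => intro _ k _; simp
  | succ i ih =>
    intro hin k hkd
    obtain ⟨lo, hi⟩ := ih (by omega) k hkd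
    have hd0 : (0:ℝ) < d := by exact_mod_cast (by omega : 0 < d)
    have hdn : (0:ℝ) < (d:ℝ) - n := by
      have : (n:ℝ) < d := by exact_mod_cast hnd
      linarith
    have hdi : (0:ℝ) < (d:ℝ) - i := by
      have : (i:ℝ) ≤ n := by exact_mod_cast (by omega : i ≤ n)
      have : (n:ℝ) < d := by exact_mod_cast hnd
      have h' : (i:ℝ) ≤ n := by exact_mod_cast (by omega : i ≤ n)
      linarith
    have hx0 : (0:ℝ) ≤ (k:ℝ)/d := by positivity
    have hx1 : (k:ℝ)/d ≤ 1 := by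
      rw [div_le_one hd0]; exact_mod_cast hkd
    set x : ℝ := (k:ℝ)/d with hxdef
    have hDpos : (0:ℝ) < (d.descFactorial i : ℝ) := by
      have : d.descFactorial i ≠ 0 := by
        simp [Nat.descFactorial_eq_zero_iff_lt]; omega
      exact_mod_cast Nat.pos_of_ne_zero this
    set r : ℝ := (k.descFactorial i : ℝ)/(d.descFactorial i : ℝ) with hrdef
    have hr0 : (0:ℝ) ≤ r := by positivity
    set t : ℝ := ((k - i : ℕ):ℝ)/((d:ℝ) - (i:ℝ)) with htdef
    have ht0 : (0:ℝ) ≤ t := by positivity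
    have hrr : (k.descFactorial (i+1) : ℝ)/(d.descFactorial (i+1) : ℝ) = t * r := by
      rw [Nat.descFactorial_succ, Nat.descFactorial_succ]
      push_cast
      have hcastd : ((d - i : ℕ):ℝ) = (d:ℝ) - i := by
        have h : i ≤ d := by omega
        push_cast [h]; ring
      rw [hcastd, htdef, hrdef]
      field_simp
    have htx : t ≤ x := by
      by_cases hki : k < i
      · have h0 : k - i = 0 := by omega
        rw [htdef, h0]; simpa using hx0
      · have hcastk : ((k - i : ℕ):ℝ) = (k:ℝ) - i := by
          have h : i ≤ k := by omega
          push_cast [h]; ring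
        rw [htdef, hcastk, hxdef, div_le_div_iff₀ hdi hd0]
        have hik : (0:ℝ) ≤ i := by positivity
        have hkd' : (k:ℝ) ≤ d := by exact_mod_cast hkd
        nlinarith
    clear_value x r t
    rw [hrr]
    constructor
    · by_cases hki : k ≤ i
      · have hxs : x ≤ (n:ℝ)/((d:ℝ)-n) := by
          rw [hxdef, div_le_div_iff₀ hd0 hdn]
          have hkn : (k:ℝ) ≤ n := by exact_mod_cast (by omega : k ≤ n)
          have hk0 : (0:ℝ) ≤ k := by positivity
          nlinarith
        have hpow : x ^ (i+1) ≤ x := pow_le_of_le_one hx0 hx1 (by omega)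
        have hE : (0:ℝ) ≤ (n:ℝ)/((d:ℝ)-n) := by positivity
        have hi0 : (0:ℝ) ≤ (i:ℝ) := by positivity
        have hcast : ((i+1 : ℕ):ℝ) * (n:ℝ) / ((d:ℝ)-n)
            = ((i:ℝ)+1) * ((n:ℝ)/((d:ℝ)-n)) := by push_cast; ring
        have hle0 : x ^ (i+1) - ((i+1 : ℕ):ℝ) * (n:ℝ) / ((d:ℝ)-n) ≤ 0 := by
          rw [hcast]; nlinarith
        calc x ^ (i+1) - ((i+1 : ℕ):ℝ) * (n:ℝ) / ((d:ℝ)-n) ≤ 0 := hle0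
          _ ≤ t * r := mul_nonneg ht0 hr0
      · have hcastk : ((k - i : ℕ):ℝ) = (k:ℝ) - i := by
          have h : i ≤ k := by omega
          push_cast [h]; ring
        have key : x - (n:ℝ)/((d:ℝ)-n) ≤ t := by
          have hsub : x - t = ((i:ℝ)*((d:ℝ)-k))/((d:ℝ)*((d:ℝ)-i)) := by
            rw [htdef, hcastk, hxdef]
            field_simp
            ring
          have hcmp : ((i:ℝ)*((d:ℝ)-k))/((d:ℝ)*((d:ℝ)-i)) ≤ (n:ℝ)/((d:ℝ)-n) := by
            rw [div_le_div_iff₀ (by positivity) hdn]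
            have h1 : (i:ℝ) ≤ n := by exact_mod_cast (by omega : i ≤ n)
            have h2 : (0:ℝ) ≤ (d:ℝ) - k := by
              have : (k:ℝ) ≤ d := by exact_mod_cast hkd
              linarith
            have h3 : (d:ℝ) - n ≤ (d:ℝ) - i := by linarith
            have h4 : (0:ℝ) ≤ i := by positivity
            have h5 : (d:ℝ) - k ≤ d := by
              have : (0:ℝ) ≤ k := by positivity
              linarith
            have s1 : (i:ℝ)*((d:ℝ)-k)*((d:ℝ)-n) ≤ (n:ℝ)*((d:ℝ)-k)*((d:ℝ)-n) :=
              mul_le_mul_of_nonneg_right (mul_le_mul_of_nonneg_right h1 h2) hdn.le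
            have s2 : (n:ℝ)*((d:ℝ)-k)*((d:ℝ)-n) ≤ (n:ℝ)*(d:ℝ)*((d:ℝ)-n) :=
              mul_le_mul_of_nonneg_right
                (mul_le_mul_of_nonneg_left h5 (by positivity)) hdn.le
            have s3 : (n:ℝ)*(d:ℝ)*((d:ℝ)-n) ≤ (n:ℝ)*(d:ℝ)*((d:ℝ)-i) :=
              mul_le_mul_of_nonneg_left h3 (by positivity)
            nlinarith [s1, s2, s3]
          linarith
        have hpowle1 : x ^ i ≤ 1 := pow_le_one₀ hx0 hx1
        have hpow0 : (0:ℝ) ≤ x ^ i := pow_nonneg hx0 i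
        have hE0 : (0:ℝ) ≤ ((i:ℝ)*(n:ℝ))/((d:ℝ)-n) := by positivity
        have he0 : (0:ℝ) ≤ (n:ℝ)/((d:ℝ)-n) := by positivity
        have p1 : t * (x^i - ((i:ℝ)*(n:ℝ))/((d:ℝ)-n)) ≤ t * r :=
          mul_le_mul_of_nonneg_left lo ht0
        have p2 : (x - (n:ℝ)/((d:ℝ)-n)) * x^i ≤ t * x^i :=
          mul_le_mul_of_nonneg_right key hpow0
        have p3 : t * (((i:ℝ)*(n:ℝ))/((d:ℝ)-n)) ≤ ((i:ℝ)*(n:ℝ))/((d:ℝ)-n) := by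
          nlinarith [htx, hx1, ht0]
        have p4 : ((n:ℝ)/((d:ℝ)-n)) * x^i ≤ (n:ℝ)/((d:ℝ)-n) := by nlinarith
        have hcast : ((i+1 : ℕ):ℝ) * (n:ℝ) / ((d:ℝ)-n)
            = ((i:ℝ)*(n:ℝ))/((d:ℝ)-n) + (n:ℝ)/((d:ℝ)-n) := by push_cast; ring
        rw [hcast, pow_succ]
        nlinarith [p1, p2, p3, p4]
    · calc t * r ≤ x * x^i := mul_le_mul htx hi hr0 hx0
        _ = x ^ (i+1) := by ring

def GoodRep (p : Polynomial ℝ) (d : ℕ) : Prop :=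
  ∃ β : ℕ → ℝ, (∀ k ≤ d, 0 ≤ β k) ∧
    p = ∑ k ∈ Finset.range (d + 1), Polynomial.C (β k) * bernsteinPolynomial ℝ d k

lemma polya_core (q : Polynomial ℝ) (hq : ∀ x ∈ Set.Icc (0:ℝ) 1, 0 < q.eval x) :
    ∃ d₀ : ℕ, q.natDegree ≤ d₀ ∧ ∀ d, d₀ ≤ d → GoodRep q d := by
  set n := q.natDegree with hn
  obtain ⟨x₀, hx₀, hmin⟩ := isCompact_Icc.exists_isMinOn (Set.nonempty_Icc.mpr zero_le_one)
    ((Polynomial.continuous q).continuousOn (s := Set.Icc (0:ℝ) 1))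
  set ε : ℝ := q.eval x₀ with hε
  have hε0 : 0 < ε := hq x₀ hx₀
  set C : ℝ := (∑ i ∈ range (n+1), |q.coeff i|) * (n * n) with hC
  have hC0 : 0 ≤ C := by positivity
  refine ⟨n + 1 + ⌈C / ε⌉₊, by omega, ?_⟩
  intro d hd
  have hnd : n < d := by omega
  have hd0 : (0:ℝ) < d := by exact_mod_cast (by omega : 0 < d)
  have hdn : (0:ℝ) < (d:ℝ) - n := by
    have : (n:ℝ) < d := by exact_mod_cast hnd
    linarith
  set β : ℕ → ℝ := fun k =>
    ∑ i ∈ range (n+1), q.coeff i * ((k.descFactorial i : ℝ) / (d.descFactorial i : ℝ)) with hβ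
  have hCd : C / ((d:ℝ) - n) ≤ ε := by
    rw [div_le_iff₀ hdn]
    have h1 : C / ε ≤ (⌈C / ε⌉₊ : ℝ) := Nat.le_ceil _
    have h2 : (1:ℝ) + (⌈C / ε⌉₊ : ℝ) ≤ (d:ℝ) - n := by
      have hle : (n + 1 + ⌈C / ε⌉₊ : ℕ) ≤ d := hd
      have hcast : ((n + 1 + ⌈C / ε⌉₊ : ℕ) : ℝ) ≤ (d:ℝ) := by exact_mod_cast hle
      push_cast at hcast
      linarith
    have h3 : C ≤ ε * (⌈C / ε⌉₊ : ℝ) := by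
      rw [mul_comm, ← div_le_iff₀ hε0]
      exact h1
    have h4 : (0:ℝ) ≤ (⌈C / ε⌉₊ : ℝ) := by positivity
    nlinarith
  refine ⟨β, ?_, ?_⟩
  · -- nonnegativity
    intro k hkd
    have hxk : (k:ℝ)/d ∈ Set.Icc (0:ℝ) 1 := by
      constructor
      · positivity
      · rw [div_le_one hd0]; exact_mod_cast hkd
    have hevalx : q.eval ((k:ℝ)/d) = ∑ i ∈ range (n+1), q.coeff i * ((k:ℝ)/d)^i :=
      Polynomial.eval_eq_sum_range _
    have hdiff : |β k - q.eval ((k:ℝ)/d)| ≤ C / ((d:ℝ) - n) := by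
      rw [hevalx, hβ]
      simp only [← Finset.sum_sub_distrib]
      refine (Finset.abs_sum_le_sum_abs _ _).trans ?_
      rw [hC, Finset.sum_mul, Finset.sum_div]
      apply Finset.sum_le_sum
      intro i hi
      simp only [Finset.mem_range] at hi
      have hin : i ≤ n := by omega
      obtain ⟨blo, bhi⟩ := ratio_bounds n d hnd i hin k hkd
      have habs : |(k.descFactorial i : ℝ)/(d.descFactorial i : ℝ) - ((k:ℝ)/d)^i|
          ≤ ((i:ℝ)*n)/((d:ℝ)-n) := by
        rw [abs_le]
        have hnn : (0:ℝ) ≤ ((i:ℝ)*n)/((d:ℝ)-n) := by positivity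
        constructor <;> linarith
      have h2 : ((i:ℝ)*n)/((d:ℝ)-n) ≤ ((n:ℝ)*n)/((d:ℝ)-n) := by
        have : (i:ℝ) ≤ n := by exact_mod_cast hin
        gcongr
      calc |q.coeff i * ((k.descFactorial i : ℝ)/(d.descFactorial i : ℝ))
              - q.coeff i * ((k:ℝ)/d)^i|
          = |q.coeff i| * |(k.descFactorial i : ℝ)/(d.descFactorial i : ℝ) - ((k:ℝ)/d)^i| := by
            rw [← abs_mul]; ring_nf
        _ ≤ |q.coeff i| * (((n:ℝ)*n)/((d:ℝ)-n)) := by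
            apply mul_le_mul_of_nonneg_left (habs.trans h2) (abs_nonneg _)
        _ = |q.coeff i| * ((n:ℝ)*n) / ((d:ℝ)-n) := by ring
    have hmin' : ε ≤ q.eval ((k:ℝ)/d) := isMinOn_iff.mp hmin _ hxk
    have := abs_le.mp hdiff
    simp only [hβ] at this ⊢
    linarith [this.1, this.2]
  · -- the representation identity
    apply Polynomial.funext
    intro x
    rw [Polynomial.eval_finset_sum]
    simp only [Polynomial.eval_mul, Polynomial.eval_C]
    have hterm : ∀ k, β k * (bernsteinPolynomial ℝ d k).eval x
        = ∑ i ∈ range (n+1), q.coeff i *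
            (((k.descFactorial i : ℝ)/(d.descFactorial i : ℝ))
              * (bernsteinPolynomial ℝ d k).eval x) := by
      intro k
      rw [hβ, Finset.sum_mul]
      exact Finset.sum_congr rfl fun i _ => by ring
    rw [Finset.sum_congr rfl fun k _ => hterm k, Finset.sum_comm]
    rw [show Polynomial.eval x q = ∑ i ∈ range (n+1), q.coeff i * x^i from
      Polynomial.eval_eq_sum_range _]
    apply Finset.sum_congr rfl
    intro i hi
    simp only [Finset.mem_range] at hi
    rw [← Finset.mul_sum, core_sum d i (by omega) x]

lemma X_mul_bern (d k : ℕ) :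
    (X : Polynomial ℝ) * bernsteinPolynomial ℝ d k
      = Polynomial.C (((k:ℝ)+1)/((d:ℝ)+1)) * bernsteinPolynomial ℝ (d+1) (k+1) := by
  apply Polynomial.funext
  intro x
  have hkey : ((d+1 : ℕ):ℝ) * (d.choose k : ℝ) = ((d+1).choose (k+1) : ℝ) * ((k+1:ℕ):ℝ) := by
    exact_mod_cast Nat.add_one_mul_choose_eq d k
  have hd1 : ((d:ℝ)+1) ≠ 0 := by positivity
  simp only [Polynomial.eval_mul, Polynomial.eval_C, Polynomial.eval_X, bernsteinPolynomial,
    Polynomial.eval_smul, Polynomial.eval_pow, Polynomial.eval_sub, Polynomial.eval_one,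
    nsmul_eq_mul, Polynomial.eval_natCast, Nat.succ_sub_succ]
  push_cast at hkey ⊢
  field_simp
  linear_combination (x^k * x * (1-x)^(d-k)) * hkey

lemma one_sub_X_mul_bern (d k : ℕ) (hkd : k ≤ d) :
    ((1 : Polynomial ℝ) - X) * bernsteinPolynomial ℝ d k
      = Polynomial.C (((d:ℝ)+1-k)/((d:ℝ)+1)) * bernsteinPolynomial ℝ (d+1) k := by
  apply Polynomial.funext
  intro x
  have hkey : (d.choose k : ℝ) * ((d+1 : ℕ):ℝ) = ((d+1).choose k : ℝ) * ((d+1-k : ℕ):ℝ) := by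
    exact_mod_cast Nat.choose_mul_succ_eq d k
  have hd1 : ((d:ℝ)+1) ≠ 0 := by positivity
  have hsub : d + 1 - k = (d - k) + 1 := by omega
  have hcast : ((d+1-k : ℕ):ℝ) = (d:ℝ)+1-k := by
    rw [Nat.cast_sub (by omega)]; push_cast; ring
  rw [hcast] at hkey
  simp only [Polynomial.eval_mul, Polynomial.eval_C, Polynomial.eval_X, bernsteinPolynomial,
    Polynomial.eval_smul, Polynomial.eval_pow, Polynomial.eval_sub, Polynomial.eval_one,
    nsmul_eq_mul, Polynomial.eval_natCast, hsub]
  push_cast at hkey ⊢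
  rw [pow_succ]
  field_simp
  linear_combination (x^k * (1-x)^(d-k) * (1-x)) * hkey

lemma goodRep_X_mul {q : Polynomial ℝ} {d : ℕ} (h : GoodRep q d) : GoodRep (X * q) (d+1) := by
  obtain ⟨β, hβ0, hrep⟩ := h
  refine ⟨fun j => if j = 0 then 0 else β (j-1) * ((j:ℝ)/((d:ℝ)+1)), ?_, ?_⟩
  · intro k hk
    by_cases h0 : k = 0
    · simp [h0]
    · simp only [if_neg h0]
      exact mul_nonneg (hβ0 _ (by omega)) (by positivity)
  · rw [hrep, Finset.mul_sum]
    rw [Finset.sum_range_succ'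
      (fun j => Polynomial.C (if j = 0 then (0:ℝ) else β (j-1) * ((j:ℝ)/((d:ℝ)+1)))
        * bernsteinPolynomial ℝ (d+1) j) (d+1)]
    simp only [if_neg (Nat.succ_ne_zero _), Nat.add_sub_cancel]
    norm_num
    apply Finset.sum_congr rfl
    intro k _
    rw [show (X : Polynomial ℝ) * (Polynomial.C (β k) * bernsteinPolynomial ℝ d k)
        = Polynomial.C (β k) * ((X : Polynomial ℝ) * bernsteinPolynomial ℝ d k) by ring,
      X_mul_bern, ← mul_assoc, ← Polynomial.C_mul]

lemma goodRep_one_sub_X_mul {q : Polynomial ℝ} {d : ℕ} (h : GoodRep q d) :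
    GoodRep ((1 - X) * q) (d+1) := by
  obtain ⟨β, hβ0, hrep⟩ := h
  refine ⟨fun k => β k * (((d:ℝ)+1-k)/((d:ℝ)+1)), ?_, ?_⟩
  · intro k hk
    by_cases hkd : k ≤ d
    · apply mul_nonneg (hβ0 _ hkd)
      have : (k:ℝ) ≤ (d:ℝ)+1 := by exact_mod_cast (by omega : k ≤ d+1)
      have h2 : (0:ℝ) ≤ (d:ℝ)+1-k := by linarith
      positivity
    · have hk1 : k = d+1 := by omega
      have hz : (d:ℝ)+1-(k:ℝ) = 0 := by rw [hk1]; push_cast; ring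
      show 0 ≤ β k * (((d:ℝ)+1-k)/((d:ℝ)+1))
      rw [hz]
      simp
  · rw [hrep, Finset.mul_sum]
    rw [Finset.sum_range_succ
      (fun k => Polynomial.C (β k * (((d:ℝ)+1-k)/((d:ℝ)+1))) * bernsteinPolynomial ℝ (d+1) k)
      (d+1)]
    have hz : (d:ℝ)+1-((d+1:ℕ):ℝ) = 0 := by push_cast; ring
    rw [hz]
    simp only [zero_div, mul_zero, map_zero, zero_mul, add_zero]
    apply Finset.sum_congr rfl
    intro k hk
    simp only [Finset.mem_range] at hk
    rw [show ((1:Polynomial ℝ) - X) * (Polynomial.C (β k) * bernsteinPolynomial ℝ d k)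
        = Polynomial.C (β k) * (((1:Polynomial ℝ) - X) * bernsteinPolynomial ℝ d k) by ring,
      one_sub_X_mul_bern d k (by omega), ← mul_assoc, ← Polynomial.C_mul]

lemma goodRep_X_pow {q : Polynomial ℝ} {d : ℕ} (a : ℕ) (h : GoodRep q d) :
    GoodRep (X^a * q) (d+a) := by
  induction a with
  | zero => simpa using h
  | succ a ih =>
    have := goodRep_X_mul ih
    rw [show (X : Polynomial ℝ) * (X^a * q) = X^(a+1) * q by ring] at this
    rw [show d + (a+1) = d + a + 1 by omega]
    exact this

lemma goodRep_one_sub_X_pow {q : Polynomial ℝ} {d : ℕ} (b : ℕ) (h : GoodRep q d) :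
    GoodRep ((1-X)^b * q) (d+b) := by
  induction b with
  | zero => simpa using h
  | succ b ih =>
    have := goodRep_one_sub_X_mul ih
    rw [show ((1:Polynomial ℝ) - X) * ((1-X)^b * q) = (1-X)^(b+1) * q by ring] at this
    rw [show d + (b+1) = d + b + 1 by omega]
    exact this

theorem bernstein_coeffs_eventually_nonneg (p : Polynomial ℝ)
    (hpos : ∀ x ∈ Set.Ioo (0 : ℝ) 1, 0 < p.eval x) :
    ∃ d₀ : ℕ, p.natDegree ≤ d₀ ∧ ∀ d, d₀ ≤ d → ∃ β : ℕ → ℝ,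
      (∀ k ≤ d, 0 ≤ β k) ∧
      p = ∑ k ∈ Finset.range (d + 1), Polynomial.C (β k) * bernsteinPolynomial ℝ d k := by
  have hp0 : p ≠ 0 := by
    intro h
    have := hpos (1/2) (by norm_num)
    rw [h] at this
    simp at this
  obtain ⟨q₁, hq1, hnd1⟩ := p.exists_eq_pow_rootMultiplicity_mul_and_not_dvd hp0 0
  set a := p.rootMultiplicity 0 with ha
  have hq10 : q₁ ≠ 0 := by
    intro h; rw [h, mul_zero] at hq1; exact hp0 hq1
  obtain ⟨q₂, hq2, hnd2⟩ := q₁.exists_eq_pow_rootMultiplicity_mul_and_not_dvd hq10 1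
  set b := q₁.rootMultiplicity 1 with hb
  set q : Polynomial ℝ := Polynomial.C ((-1:ℝ)^b) * q₂ with hqdef
  have hfac : p = X^a * ((1-X)^b * q) := by
    have h1 : ((X : Polynomial ℝ) - Polynomial.C 1)^b
        = Polynomial.C ((-1:ℝ)^b) * (1-X)^b := by
      rw [map_pow, ← mul_pow]
      congr 1
      rw [Polynomial.C_neg, Polynomial.C_1]
      ring
    rw [hq1, hq2, h1]
    simp only [Polynomial.C_0, sub_zero, hqdef]
    ring
  -- q is positive on the open interval
  have hqpos : ∀ x ∈ Set.Ioo (0:ℝ) 1, 0 < q.eval x := by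
    intro x hx
    obtain ⟨hx0, hx1⟩ := hx
    have hp : 0 < p.eval x := hpos x ⟨hx0, hx1⟩
    rw [hfac] at hp
    simp only [Polynomial.eval_mul, Polynomial.eval_pow, Polynomial.eval_sub,
      Polynomial.eval_one, Polynomial.eval_X] at hp
    have h1 : (0:ℝ) < x^a := by positivity
    have h2 : (0:ℝ) < (1-x)^b := by
      have : (0:ℝ) < 1 - x := by linarith
      positivity
    by_contra h
    push_neg at h
    nlinarith [mul_nonneg (mul_nonneg h1.le h2.le) (neg_nonneg.mpr h)]
  -- q's boundary values are nonzero
  have hq0ne : q.eval 0 ≠ 0 := by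
    have h1 : q₁.eval 0 ≠ 0 := by
      intro h
      exact hnd1 (Polynomial.dvd_iff_isRoot.mpr (by simpa using h))
    rw [hq2] at h1
    simp only [Polynomial.eval_mul, Polynomial.eval_pow, Polynomial.eval_sub,
      Polynomial.eval_X, Polynomial.eval_C] at h1
    rw [hqdef]
    simp only [Polynomial.eval_mul, Polynomial.eval_C]
    intro h
    apply h1
    rcases mul_eq_zero.mp h with h' | h'
    · exact absurd h' (by positivity)
    · rw [h']; ring
  have hq1ne : q.eval 1 ≠ 0 := by
    have h2 : q₂.eval 1 ≠ 0 := by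
      intro h
      exact hnd2 (Polynomial.dvd_iff_isRoot.mpr (by simpa using h))
    rw [hqdef]
    simp only [Polynomial.eval_mul, Polynomial.eval_C]
    intro h
    rcases mul_eq_zero.mp h with h' | h'
    · exact absurd h' (by positivity)
    · exact h2 h'
  -- q is nonnegative on the closed interval by continuity
  have hqnn : ∀ y ∈ Set.Icc (0:ℝ) 1, 0 ≤ q.eval y := by
    have hclosed : IsClosed {x : ℝ | 0 ≤ q.eval x} :=
      isClosed_le continuous_const (Polynomial.continuous q)
    have hsub : Set.Icc (0:ℝ) 1 ⊆ {x : ℝ | 0 ≤ q.eval x} := by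
      rw [← closure_Ioo (zero_ne_one)]
      exact closure_minimal (fun x hx => (hqpos x hx).le) hclosed
    exact fun y hy => hsub hy
  have hqIcc : ∀ y ∈ Set.Icc (0:ℝ) 1, 0 < q.eval y := by
    intro y hy
    rcases eq_or_lt_of_le hy.1 with h0 | h0
    · rcases (hqnn y hy).lt_or_eq with h | h
      · exact h
      · exact absurd h.symm (by rw [← h0]; exact hq0ne)
    rcases eq_or_lt_of_le hy.2 with h1 | h1
    · rcases (hqnn y hy).lt_or_eq with h | h
      · exact h
      · exact absurd h.symm (by rw [h1]; exact hq1ne)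
    exact hqpos y ⟨h0, h1⟩
  obtain ⟨e₀, he₀deg, he₀⟩ := polya_core q hqIcc
  refine ⟨max (e₀ + a + b) p.natDegree, le_max_right _ _, ?_⟩
  intro d hd
  have hd1 : e₀ + a + b ≤ d := le_trans (le_max_left _ _) hd
  have hgq : GoodRep q (d - a - b) := he₀ _ (by omega)
  have hg2 : GoodRep ((1-X)^b * q) (d - a - b + b) := goodRep_one_sub_X_pow b hgq
  have hg3 : GoodRep (X^a * ((1-X)^b * q)) (d - a - b + b + a) := goodRep_X_pow a hg2
  rw [show d - a - b + b + a = d by omega, ← hfac] at hg3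
  exact hg3
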